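/- Let n be a positive integer, 1 < p < ∞, 1 ≤ q < ∞, and β > p − 1, and let Ω = B(0,1) be the open unit ball in ℝⁿ. Then the (q,p,β)-Hardy–Sobolev inequality fails in Ω: there is no constant C > 0 such that (∫_Ω |u(x)|^q d(x,Ωᶜ)^{(q/p)(n−p+β)−n} dx)^{1/q} ≤ C (∫_Ω |∇u(x)|^p d(x,Ωᶜ)^β dx)^{1/p} for every admissible u. -/

import Mathlib

open MeasureTheory Metric Set
open scoped ENNReal NNReal

noncomputable section

/-- The distance from `x` to the complement of `Ω`. -/
def distC {n : ℕ} (Ω : Set (EuclideanSpace ℝ (Fin n))) (x : EuclideanSpace ℝ (Fin n)) : ℝ :=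
  Metric.infDist x Ωᶜ

/-- The distance between two sets. -/
def sDist {n : ℕ} (E F : Set (EuclideanSpace ℝ (Fin n))) : ℝ :=
  sInf (Set.image2 dist E F)

/-- A function is admissible for `Ω` if it is Lipschitz and has compact support contained
in `Ω`. -/
def Admissible {n : ℕ} (Ω : Set (EuclideanSpace ℝ (Fin n)))
    (u : EuclideanSpace ℝ (Fin n) → ℝ) : Prop :=
  (∃ K : NNReal, LipschitzWith K u) ∧ HasCompactSupport u ∧ tsupport u ⊆ Ω

/-- `E` is compactly contained in `Ω`: `E` is bounded and has positive distance to `Ωᶜ`. -/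
def CptIn {n : ℕ} (E Ω : Set (EuclideanSpace ℝ (Fin n))) : Prop :=
  Bornology.IsBounded E ∧ 0 < sDist E Ωᶜ

/-- The weighted `p`-energy of `u` on `Ω` with the distance weight `d(x,Ωᶜ)^β`. -/
def energy {n : ℕ} (p β : ℝ) (Ω : Set (EuclideanSpace ℝ (Fin n)))
    (u : EuclideanSpace ℝ (Fin n) → ℝ) : ℝ≥0∞ :=
  ∫⁻ x in Ω, ENNReal.ofReal (‖fderiv ℝ u x‖ ^ p * distC Ω x ^ β)

/-- The weighted relative `(p,β)`-capacity of `E` in `Ω`. -/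
def wcap {n : ℕ} (p β : ℝ) (E Ω : Set (EuclideanSpace ℝ (Fin n))) : ℝ≥0∞ :=
  ⨅ (u : EuclideanSpace ℝ (Fin n) → ℝ)
    (_ : Admissible Ω u ∧ ∀ x ∈ E, 1 ≤ u x), energy p β Ω u

/-- The `(q,p,β)`-Hardy–Sobolev inequality holds in `Ω` with constant `C`. -/
def HardySobolev {n : ℕ} (q p β : ℝ) (Ω : Set (EuclideanSpace ℝ (Fin n))) (C : ℝ) : Prop :=
  ∀ u : EuclideanSpace ℝ (Fin n) → ℝ, Admissible Ω u →
    (∫⁻ x in Ω, ENNReal.ofReal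
        (|u x| ^ q * distC Ω x ^ (q / p * ((n : ℝ) - p + β) - n))) ^ (1 / q) ≤
      ENNReal.ofReal C * (energy p β Ω u) ^ (1 / p)

section Aux

variable {n : ℕ}

local notation "E" => EuclideanSpace ℝ (Fin n)

/-- Upper bound on the distance to the complement of the unit ball. -/
lemma distC_le (hn : 0 < n) (x : E) (hx : ‖x‖ < 1) :
    Metric.infDist x (Metric.ball (0 : E) 1)ᶜ ≤ 1 - ‖x‖ := by
  rcases eq_or_ne x 0 with rfl | hx0
  · have hy : (EuclideanSpace.single (⟨0, hn⟩ : Fin n) (1 : ℝ)) ∈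
        (Metric.ball (0 : E) 1)ᶜ := by
      simp [Metric.mem_ball, dist_zero_right, EuclideanSpace.norm_single]
    have := Metric.infDist_le_dist_of_mem (x := (0 : E)) hy
    simpa [dist_zero_left, EuclideanSpace.norm_single] using this
  · have hxn : (0 : ℝ) < ‖x‖ := norm_pos_iff.2 hx0
    set y : E := ‖x‖⁻¹ • x with hy
    have hyn : ‖y‖ = 1 := by
      rw [hy, norm_smul, norm_inv, norm_norm, inv_mul_cancel₀ hxn.ne']
    have hymem : y ∈ (Metric.ball (0 : E) 1)ᶜ := by
      simp [Metric.mem_ball, dist_zero_right, hyn]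
    have hd : dist x y = 1 - ‖x‖ := by
      have : x - y = (1 - ‖x‖⁻¹) • x := by
        rw [hy, sub_smul, one_smul]
      rw [dist_eq_norm, this, norm_smul]
      rw [Real.norm_eq_abs, abs_of_nonpos (by
        have : (1 : ℝ) ≤ ‖x‖⁻¹ := (one_le_inv₀ hxn).2 hx.le
        linarith)]
      field_simp
      ring
    calc Metric.infDist x (Metric.ball (0 : E) 1)ᶜ ≤ dist x y :=
          Metric.infDist_le_dist_of_mem hymem
      _ = 1 - ‖x‖ := hd

/-- Lower bound on the distance to the complement of the unit ball. -/
lemma le_distC (hn : 0 < n) (x : E) :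
    1 - ‖x‖ ≤ Metric.infDist x (Metric.ball (0 : E) 1)ᶜ := by
  have hne : ((Metric.ball (0 : E) 1)ᶜ).Nonempty :=
    ⟨EuclideanSpace.single (⟨0, hn⟩ : Fin n) (1 : ℝ), by
      simp [Metric.mem_ball, dist_zero_right, EuclideanSpace.norm_single]⟩
  haveI := hne.to_subtype
  rw [Metric.infDist_eq_iInf]
  refine le_ciInf fun y => ?_
  have hy : (1 : ℝ) ≤ ‖(y : E)‖ := by
    have := y.2
    simp only [Set.mem_compl_iff, Metric.mem_ball, dist_zero_right, not_lt] at this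
    exact this
  have : ‖(y : E)‖ - ‖x‖ ≤ ‖(y : E) - x‖ := norm_sub_norm_le _ _
  rw [dist_eq_norm, norm_sub_rev]
  linarith

end Aux

section Bump

variable {n : ℕ}

local notation "E" => EuclideanSpace ℝ (Fin n)

/-- The test function: `1` on `‖x‖ ≤ 1-2δ`, linearly decreasing to `0` at `‖x‖ = 1-δ`. -/
def bump (δ : ℝ) (x : E) : ℝ := min 1 (max 0 ((1 - δ - ‖x‖) / δ))

lemma bump_lipschitz {δ : ℝ} (hδ : 0 < δ) :
    LipschitzWith (Real.toNNReal δ⁻¹) (bump (n := n) δ) := by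
  have hg : LipschitzWith (Real.toNNReal δ⁻¹) (fun t : ℝ => (1 - δ - t) / δ) := by
    apply LipschitzWith.of_dist_le_mul
    intro s t
    rw [Real.coe_toNNReal _ (by positivity), Real.dist_eq, Real.dist_eq]
    rw [show (1 - δ - s) / δ - (1 - δ - t) / δ = (t - s) / δ by field_simp; ring]
    rw [abs_div, abs_of_pos hδ, abs_sub_comm]
    rw [div_eq_inv_mul]
  have hmm : LipschitzWith 1 (fun t : ℝ => min 1 (max 0 t)) :=
    (LipschitzWith.id.const_max 0).const_min 1
  have h2 := (hmm.comp hg).comp (lipschitzWith_one_norm : LipschitzWith 1 (norm : E → ℝ))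
  have he : bump (n := n) δ =
      (fun t : ℝ => min 1 (max 0 t)) ∘ ((fun t : ℝ => (1 - δ - t) / δ) ∘ (norm : E → ℝ)) := rfl
  rw [he]
  simp only [one_mul, mul_one] at h2
  exact h2

lemma bump_eq_one {δ : ℝ} (hδ : 0 < δ) {x : E} (h : ‖x‖ ≤ 1 - 2 * δ) :
    bump δ x = 1 := by
  have h1 : (1 : ℝ) ≤ (1 - δ - ‖x‖) / δ := (one_le_div hδ).2 (by linarith)
  exact min_eq_left (h1.trans (le_max_right _ _))

lemma bump_eq_zero {δ : ℝ} (hδ : 0 < δ) {x : E} (h : 1 - δ ≤ ‖x‖) :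
    bump δ x = 0 := by
  have h1 : (1 - δ - ‖x‖) / δ ≤ 0 :=
    div_nonpos_of_nonpos_of_nonneg (by linarith) hδ.le
  have h2 : max 0 ((1 - δ - ‖x‖) / δ) = 0 := max_eq_left h1
  rw [bump, h2]
  exact min_eq_right (by norm_num)

lemma bump_nonneg (δ : ℝ) (x : E) : 0 ≤ bump δ x :=
  le_min (by norm_num) (le_max_left _ _)

lemma bump_le_one (δ : ℝ) (x : E) : bump δ x ≤ 1 := min_le_left _ _

lemma bump_fderiv_inner {δ : ℝ} (hδ : 0 < δ) {x : E} (h : ‖x‖ < 1 - 2 * δ) :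
    fderiv ℝ (bump δ) x = 0 := by
  have hmem : Metric.ball (0 : E) (1 - 2 * δ) ∈ nhds x :=
    Metric.isOpen_ball.mem_nhds (by simpa [Metric.mem_ball, dist_zero_right] using h)
  have hev : bump δ =ᶠ[nhds x] fun _ => (1 : ℝ) := by
    filter_upwards [hmem] with y hy
    exact bump_eq_one hδ (by
      have : ‖y‖ < 1 - 2 * δ := by simpa [Metric.mem_ball, dist_zero_right] using hy
      linarith)
  rw [Filter.EventuallyEq.fderiv_eq hev]
  simp

lemma bump_fderiv_outer {δ : ℝ} (hδ : 0 < δ) {x : E} (h : 1 - δ < ‖x‖) :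
    fderiv ℝ (bump δ) x = 0 := by
  have hmem : (Metric.closedBall (0 : E) (1 - δ))ᶜ ∈ nhds x :=
    Metric.isClosed_closedBall.isOpen_compl.mem_nhds (by
      simp [Metric.mem_closedBall, dist_zero_right, not_le, h])
  have hev : bump δ =ᶠ[nhds x] fun _ => (0 : ℝ) := by
    filter_upwards [hmem] with y hy
    exact bump_eq_zero hδ (by
      have : ¬ ‖y‖ ≤ 1 - δ := by
        simpa [Metric.mem_closedBall, dist_zero_right] using hy
      linarith)
  rw [Filter.EventuallyEq.fderiv_eq hev]
  simp

end Bump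


set_option maxHeartbeats 1000000 in
theorem stmt11 {n : ℕ} (hn : 0 < n) (p q β : ℝ) (hp : 1 < p) (hq : 1 ≤ q)
    (hβ : p - 1 < β) :
    ¬ ∃ C > 0, HardySobolev q p β (Metric.ball (0 : EuclideanSpace ℝ (Fin n)) 1) C := by
  rintro ⟨C, hC, hHS⟩
  simp only [HardySobolev] at hHS
  have hp0 : (0 : ℝ) < p := by linarith
  have hq0 : (0 : ℝ) < q := by linarith
  have hβ0 : (0 : ℝ) < β := by linarith
  have hn0 : (0 : ℝ) < (n : ℝ) := Nat.cast_pos.2 hn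
  set Ω : Set (EuclideanSpace ℝ (Fin n)) := Metric.ball 0 1 with hΩ
  set α : ℝ := q / p * ((n : ℝ) - p + β) - n with hα
  set m : ℝ := min ((2⁻¹ : ℝ) ^ α) 1 with hm
  have hmpos : 0 < m := lt_min (Real.rpow_pos_of_pos (by norm_num) _) one_pos
  set μB2 := volume (Metric.ball (0 : EuclideanSpace ℝ (Fin n)) 2⁻¹) with hμB2
  have hμB2pos : 0 < μB2 := measure_ball_pos _ _ (by norm_num)
  have hμB2lt : μB2 < ⊤ := measure_ball_lt_top
  set L0 : ℝ≥0∞ := (ENNReal.ofReal m * μB2) ^ (1 / q) with hL0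
  have hbase_pos : 0 < ENNReal.ofReal m * μB2 :=
    ENNReal.mul_pos (ENNReal.ofReal_pos.2 hmpos).ne' hμB2pos.ne'
  have hbase_top : ENNReal.ofReal m * μB2 ≠ ⊤ :=
    ENNReal.mul_ne_top ENNReal.ofReal_ne_top hμB2lt.ne
  have hL0pos : 0 < L0 := ENNReal.rpow_pos hbase_pos hbase_top
  have hL0top : L0 ≠ ⊤ := ENNReal.rpow_ne_top_of_nonneg (by positivity) hbase_top
  set L' : ℝ := L0.toReal with hL'
  have hL'pos : 0 < L' := ENNReal.toReal_pos hL0pos.ne' hL0top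
  set V : ℝ := (volume (Metric.ball (0 : EuclideanSpace ℝ (Fin n)) 1)).toReal with hV
  have hVpos : 0 < V :=
    ENNReal.toReal_pos (measure_ball_pos _ _ one_pos).ne' measure_ball_lt_top.ne
  set Kc : ℝ := (2 : ℝ) ^ β * 2 * (n : ℝ) * V with hKc
  have hKcpos : 0 < Kc := by positivity
  set sE : ℝ := β - p + 1 with hsE
  have hsEpos : 0 < sE := by simp only [hsE]; linarith
  -- choose δ
  obtain ⟨δ, hφδ, hδ0, hδ4⟩ :
      ∃ δ : ℝ, C * (Kc * δ ^ sE) ^ (1 / p) < L' ∧ 0 < δ ∧ δ < 4⁻¹ := by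
    have h1 : ContinuousAt (fun δ : ℝ => δ ^ sE) 0 :=
      Real.continuousAt_rpow_const 0 sE (Or.inr hsEpos.le)
    have hcont : ContinuousAt (fun δ : ℝ => C * (Kc * δ ^ sE) ^ (1 / p)) 0 :=
      continuousAt_const.mul ((continuousAt_const.mul h1).rpow_const (Or.inr (by positivity)))
    have h0 : C * (Kc * (0 : ℝ) ^ sE) ^ (1 / p) = 0 := by
      rw [Real.zero_rpow hsEpos.ne', mul_zero,
        Real.zero_rpow (by positivity : (1 : ℝ) / p ≠ 0), mul_zero]
    have hev : ∀ᶠ δ in nhds (0 : ℝ), C * (Kc * δ ^ sE) ^ (1 / p) < L' := by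
      have ht := hcont.tendsto
      rw [h0] at ht
      exact ht.eventually_lt_const hL'pos
    have hIoo : Set.Ioo (0 : ℝ) 4⁻¹ ∈ nhdsWithin (0 : ℝ) (Set.Ioi 0) :=
      Ioo_mem_nhdsGT_of_mem ⟨le_refl 0, by norm_num⟩
    have hev2 : ∀ᶠ δ in nhdsWithin (0 : ℝ) (Set.Ioi 0),
        C * (Kc * δ ^ sE) ^ (1 / p) < L' ∧ 0 < δ ∧ δ < 4⁻¹ := by
      filter_upwards [hev.filter_mono nhdsWithin_le_nhds, hIoo] with δ h1 h2
      exact ⟨h1, h2.1, h2.2⟩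
    obtain ⟨δ, h1, h2, h3⟩ := hev2.exists
    exact ⟨δ, h1, h2, h3⟩
  have h2δ : 2 * δ < 2⁻¹ := by linarith
  -- admissibility of the bump function
  have hAdm : Admissible Ω (bump δ) := by
    refine ⟨⟨_, bump_lipschitz hδ0⟩, ?_, ?_⟩
    · have hsupp : Function.support (bump δ) ⊆
          Metric.closedBall (0 : EuclideanSpace ℝ (Fin n)) (1 - δ) := by
        intro x hx
        by_contra h
        apply hx
        refine bump_eq_zero hδ0 ?_
        have : ¬ ‖x‖ ≤ 1 - δ := by
          simpa [Metric.mem_closedBall, dist_zero_right] using h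
        linarith
      have hts : tsupport (bump δ) ⊆
          Metric.closedBall (0 : EuclideanSpace ℝ (Fin n)) (1 - δ) :=
        closure_minimal hsupp Metric.isClosed_closedBall
      exact IsCompact.of_isClosed_subset (isCompact_closedBall _ _) (isClosed_tsupport _) hts
    · have hsupp : Function.support (bump δ) ⊆
          Metric.closedBall (0 : EuclideanSpace ℝ (Fin n)) (1 - δ) := by
        intro x hx
        by_contra h
        apply hx
        refine bump_eq_zero hδ0 ?_
        have : ¬ ‖x‖ ≤ 1 - δ := by
          simpa [Metric.mem_closedBall, dist_zero_right] using h
        linarith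
      exact (closure_minimal hsupp Metric.isClosed_closedBall).trans
        (Metric.closedBall_subset_ball (by linarith))
  -- energy upper bound
  set S : Set (EuclideanSpace ℝ (Fin n)) :=
    Metric.closedBall 0 (1 - δ) \ Metric.ball 0 (1 - 2 * δ) with hS
  have hSm : MeasurableSet S := measurableSet_closedBall.diff measurableSet_ball
  set c₁ : ℝ≥0∞ := ENNReal.ofReal (δ⁻¹ ^ p * (2 * δ) ^ β) with hc₁
  have hpt : ∀ x ∈ Ω, ENNReal.ofReal (‖fderiv ℝ (bump δ) x‖ ^ p * distC Ω x ^ β)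
      ≤ S.indicator (fun _ => c₁) x := by
    intro x hx
    have hxlt : ‖x‖ < 1 := by simpa [hΩ, Metric.mem_ball, dist_zero_right] using hx
    by_cases hxS : x ∈ S
    · rw [Set.indicator_of_mem hxS]
      have hx1 : ¬ ‖x‖ < 1 - 2 * δ := by
        simpa [Metric.mem_ball, dist_zero_right] using hxS.2
      have hder : ‖fderiv ℝ (bump δ) x‖ ≤ δ⁻¹ := by
        have h := norm_fderiv_le_of_lipschitz ℝ (bump_lipschitz (n := n) hδ0) (x₀ := x)
        rwa [Real.coe_toNNReal _ (by positivity)] at h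
      have hdist : distC Ω x ≤ 2 * δ := by
        have h := distC_le hn x hxlt
        simp only [distC, hΩ]
        push_neg at hx1
        linarith
      apply ENNReal.ofReal_le_ofReal
      have h1 : ‖fderiv ℝ (bump δ) x‖ ^ p ≤ δ⁻¹ ^ p :=
        Real.rpow_le_rpow (norm_nonneg _) hder hp0.le
      have h2 : distC Ω x ^ β ≤ (2 * δ) ^ β :=
        Real.rpow_le_rpow Metric.infDist_nonneg hdist hβ0.le
      exact mul_le_mul h1 h2 (Real.rpow_nonneg Metric.infDist_nonneg β) (by positivity)
    · have hfz : fderiv ℝ (bump δ) x = 0 := by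
        rw [hS, Set.mem_diff] at hxS
        push_neg at hxS
        by_cases hcb : x ∈ Metric.closedBall (0 : EuclideanSpace ℝ (Fin n)) (1 - δ)
        · have := hxS hcb
          exact bump_fderiv_inner hδ0 (by simpa [Metric.mem_ball, dist_zero_right] using this)
        · refine bump_fderiv_outer hδ0 ?_
          have : ¬ ‖x‖ ≤ 1 - δ := by
            simpa [Metric.mem_closedBall, dist_zero_right] using hcb
          linarith
      rw [Set.indicator_of_notMem hxS, hfz]
      simp [Real.zero_rpow hp0.ne']
  have hμS : volume S ≤ ENNReal.ofReal (2 * (n : ℝ) * δ) *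
      volume (Metric.ball (0 : EuclideanSpace ℝ (Fin n)) 1) := by
    have hsub : Metric.ball (0 : EuclideanSpace ℝ (Fin n)) (1 - 2 * δ) ⊆
        Metric.closedBall 0 (1 - δ) :=
      Metric.ball_subset_closedBall.trans (Metric.closedBall_subset_closedBall (by linarith))
    rw [hS, measure_diff hsub measurableSet_ball.nullMeasurableSet measure_ball_lt_top.ne]
    rw [tsub_le_iff_right]
    have hber : (1 : ℝ) ≤ 2 * (n : ℝ) * δ + (1 - 2 * δ) ^ n := by
      have h := one_add_mul_le_pow (a := -(2 * δ)) (by linarith) n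
      have he : (1 + -(2 * δ)) = 1 - 2 * δ := by ring
      rw [he] at h
      nlinarith
    calc volume (Metric.closedBall (0 : EuclideanSpace ℝ (Fin n)) (1 - δ))
        ≤ volume (Metric.ball (0 : EuclideanSpace ℝ (Fin n)) 1) :=
          measure_mono (Metric.closedBall_subset_ball (by linarith))
      _ = 1 * volume (Metric.ball (0 : EuclideanSpace ℝ (Fin n)) 1) := (one_mul _).symm
      _ ≤ (ENNReal.ofReal (2 * (n : ℝ) * δ) + ENNReal.ofReal ((1 - 2 * δ) ^ n)) *
          volume (Metric.ball (0 : EuclideanSpace ℝ (Fin n)) 1) := by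
          refine mul_le_mul_left ?_ _
          rw [← ENNReal.ofReal_one, ← ENNReal.ofReal_add (by positivity) (pow_nonneg (by linarith) n)]
          exact ENNReal.ofReal_le_ofReal hber
      _ = ENNReal.ofReal (2 * (n : ℝ) * δ) *
            volume (Metric.ball (0 : EuclideanSpace ℝ (Fin n)) 1) +
          ENNReal.ofReal ((1 - 2 * δ) ^ n) *
            volume (Metric.ball (0 : EuclideanSpace ℝ (Fin n)) 1) := add_mul _ _ _
      _ = ENNReal.ofReal (2 * (n : ℝ) * δ) *
            volume (Metric.ball (0 : EuclideanSpace ℝ (Fin n)) 1) +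
          volume (Metric.ball (0 : EuclideanSpace ℝ (Fin n)) (1 - 2 * δ)) := by
          rw [Measure.addHaar_ball_of_pos volume (0 : EuclideanSpace ℝ (Fin n))
            (by linarith : (0 : ℝ) < 1 - 2 * δ), finrank_euclideanSpace_fin]
  have hE : energy p β Ω (bump δ) ≤ ENNReal.ofReal (Kc * δ ^ sE) := by
    have hstep1 : energy p β Ω (bump δ) ≤ c₁ * volume S := by
      calc energy p β Ω (bump δ)
          ≤ ∫⁻ x in Ω, S.indicator (fun _ => c₁) x := by
            simp only [energy]
            exact setLIntegral_mono' measurableSet_ball hpt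
        _ = c₁ * (volume.restrict Ω) S := lintegral_indicator_const hSm c₁
        _ ≤ c₁ * volume S := by
            refine mul_le_mul_right ?_ _
            rw [Measure.restrict_apply hSm]
            exact measure_mono Set.inter_subset_left
    have hreal : δ⁻¹ ^ p * (2 * δ) ^ β * (2 * (n : ℝ) * δ * V) = Kc * δ ^ sE := by
      have e1 : δ⁻¹ ^ p = δ ^ (-p) := by
        rw [Real.rpow_neg hδ0.le, Real.inv_rpow hδ0.le]
      have e2 : ((2 : ℝ) * δ) ^ β = 2 ^ β * δ ^ β := Real.mul_rpow (by norm_num) hδ0.le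
      have e3 : δ ^ (-p) * δ ^ β * δ ^ (1 : ℝ) = δ ^ sE := by
        rw [← Real.rpow_add hδ0, ← Real.rpow_add hδ0]
        congr 1
        simp only [hsE]; ring
      have e4 : δ ^ (1 : ℝ) = δ := Real.rpow_one δ
      have e3' : δ ^ (-p) * δ ^ β * δ = δ ^ sE := by rw [← e3, e4]
      rw [e1, e2, hKc, ← e3']
      ring
    calc energy p β Ω (bump δ) ≤ c₁ * volume S := hstep1
      _ ≤ c₁ * (ENNReal.ofReal (2 * (n : ℝ) * δ) *
            volume (Metric.ball (0 : EuclideanSpace ℝ (Fin n)) 1)) := mul_le_mul_right hμS _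
      _ = c₁ * (ENNReal.ofReal (2 * (n : ℝ) * δ) * ENNReal.ofReal V) := by
          rw [hV, ENNReal.ofReal_toReal measure_ball_lt_top.ne]
      _ = ENNReal.ofReal (δ⁻¹ ^ p * (2 * δ) ^ β * (2 * (n : ℝ) * δ * V)) := by
          rw [hc₁, ← ENNReal.ofReal_mul (by positivity), ← ENNReal.ofReal_mul (by positivity)]
      _ = ENNReal.ofReal (Kc * δ ^ sE) := by rw [hreal]
  -- lower bound for the left-hand side
  have hLHS : ENNReal.ofReal m * μB2 ≤
      ∫⁻ x in Ω, ENNReal.ofReal (|bump δ x| ^ q * distC Ω x ^ α) := by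
    calc ENNReal.ofReal m * μB2
        = ∫⁻ _ in Metric.ball (0 : EuclideanSpace ℝ (Fin n)) 2⁻¹, ENNReal.ofReal m := by
          rw [setLIntegral_const, hμB2]
      _ ≤ ∫⁻ x in Metric.ball (0 : EuclideanSpace ℝ (Fin n)) 2⁻¹,
            ENNReal.ofReal (|bump δ x| ^ q * distC Ω x ^ α) := by
          refine setLIntegral_mono' measurableSet_ball fun x hx => ?_
          have hxn : ‖x‖ < 2⁻¹ := by simpa [Metric.mem_ball, dist_zero_right] using hx
          have hu1 : bump δ x = 1 := bump_eq_one hδ0 (by linarith)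
          have hd1 : (2⁻¹ : ℝ) ≤ distC Ω x := by
            have := le_distC hn x
            simp only [distC, hΩ]
            linarith
          have hd2 : distC Ω x ≤ 1 := by
            have := distC_le hn x (by linarith : ‖x‖ < 1)
            simp only [distC, hΩ]
            have hxnn : 0 ≤ ‖x‖ := norm_nonneg x
            linarith
          have hdm : m ≤ distC Ω x ^ α := by
            rcases le_or_gt 0 α with hα0 | hα0
            · exact (min_le_left _ _).trans (Real.rpow_le_rpow (by norm_num) hd1 hα0)
            · refine (min_le_right _ _).trans ?_
              have h := Real.rpow_le_rpow_of_nonpos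
                (lt_of_lt_of_le (by norm_num) hd1) hd2 hα0.le
              simpa [Real.one_rpow] using h
          apply ENNReal.ofReal_le_ofReal
          rw [hu1]
          simpa [Real.one_rpow] using hdm
      _ ≤ ∫⁻ x in Ω, ENNReal.ofReal (|bump δ x| ^ q * distC Ω x ^ α) := by
          refine lintegral_mono_set ?_
          rw [hΩ]
          exact Metric.ball_subset_ball (by norm_num)
  -- conclude
  have hHSu := hHS (bump δ) hAdm
  have hL : L0 ≤ (∫⁻ x in Ω, ENNReal.ofReal (|bump δ x| ^ q * distC Ω x ^ α)) ^ (1 / q) :=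
    ENNReal.rpow_le_rpow hLHS (by positivity)
  have hR : (energy p β Ω (bump δ)) ^ (1 / p) ≤ ENNReal.ofReal ((Kc * δ ^ sE) ^ (1 / p)) := by
    have h := ENNReal.rpow_le_rpow hE (by positivity : (0 : ℝ) ≤ 1 / p)
    rwa [ENNReal.ofReal_rpow_of_nonneg (by positivity) (by positivity)] at h
  have hfinal : L0 ≤ ENNReal.ofReal (C * (Kc * δ ^ sE) ^ (1 / p)) := by
    have h1 : L0 ≤ ENNReal.ofReal C * (energy p β Ω (bump δ)) ^ (1 / p) := by
      refine hL.trans ?_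
      simpa [hα] using hHSu
    rw [ENNReal.ofReal_mul hC.le]
    exact h1.trans (mul_le_mul_right hR _)
  have hlt : ENNReal.ofReal (C * (Kc * δ ^ sE) ^ (1 / p)) < L0 := by
    rw [← ENNReal.ofReal_toReal hL0top]
    exact (ENNReal.ofReal_lt_ofReal_iff hL'pos).2 hφδ
  exact lt_irrefl _ (hfinal.trans_lt hlt)
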